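/- Let 𝒞 and 𝒞' be two covers that agree at every vertex except possibly at a single vertex k. Then Φ₂(𝒞') − Φ₂(𝒞) = u_k(𝒞') − u_k(𝒞). In other words, Φ₂ is a weighted potential function for the second-phase community game, so this game converges to a pure Nash equilibrium. -/
import Mathlib


open Finset

/-- Community-closeness `p(i, C)` of vertex `i` to community `C` under the cover `cov`:
the sum of edge-closeness values `p i j` over the vertices `j` whose set of communities
contains `C`. -/
noncomputable def commCloseness {V K : Type*} [Fintype V] [DecidableEq K]
    (p : V → V → ℝ) (cov : V → Finset K) (i : V) (C : K) : ℝ :=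
  ∑ j : V, if C ∈ cov j then p i j else 0

/-- Utility `u_i(cov)` of player `i`: the sum of its community-closeness values to all of
its own communities. -/
noncomputable def utility2 {V K : Type*} [Fintype V] [DecidableEq K]
    (p : V → V → ℝ) (cov : V → Finset K) (i : V) : ℝ :=
  ∑ C ∈ cov i, commCloseness p cov i C

/-- The potential `Φ₂(cov) = (1/2) Σ_i Σ_{C ∈ cov i} p(i, C)`. -/
noncomputable def phi2 {V K : Type*} [Fintype V] [DecidableEq K]
    (p : V → V → ℝ) (cov : V → Finset K) : ℝ :=
  (1 / 2) * ∑ i : V, ∑ C ∈ cov i, commCloseness p cov i C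

/-- If two covers agree at every vertex except possibly at a single
vertex `k`, then `Φ₂(𝒞') − Φ₂(𝒞) = u_k(𝒞') − u_k(𝒞)`: `Φ₂` is a (weighted) potential
function for the second-phase community game, so the game converges to a pure Nash
equilibrium. -/
theorem phi2_is_weighted_potential {V K : Type*} [Fintype V] [Fintype K] [DecidableEq K]
    (p : V → V → ℝ)
    (hp_nonneg : ∀ i j, 0 ≤ p i j)
    (hp_symm : ∀ i j, p i j = p j i)
    (hp_diag : ∀ i, p i i = 0)
    (cov cov' : V → Finset K) (k : V)
    (hagree : ∀ j, j ≠ k → cov' j = cov j) :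
    phi2 p cov' - phi2 p cov = utility2 p cov' k - utility2 p cov k := by
  classical
  set q : (V → Finset K) → V → V → ℝ :=
    fun c i j => ((c i ∩ c j).card : ℝ) * p i j with hq
  have key : ∀ (c : V → Finset K) (i : V),
      ∑ C ∈ c i, commCloseness p c i C = ∑ j, q c i j := by
    intro c i
    unfold commCloseness
    rw [Finset.sum_comm]
    refine Finset.sum_congr rfl fun j _ => ?_
    rw [Finset.sum_ite_mem, Finset.sum_const, nsmul_eq_mul]
  set d : V → V → ℝ := fun i j => q cov' i j - q cov i j with hdd
  have hdsymm : ∀ i j, d i j = d j i := by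
    intro i j
    simp only [hdd, hq, Finset.inter_comm, hp_symm i j]
  have hd0 : ∀ i j, i ≠ k → j ≠ k → d i j = 0 := by
    intro i j hi hj
    simp only [hdd, hq, hagree i hi, hagree j hj, sub_self]
  have hdkk : d k k = 0 := by
    simp [hdd, hq, hp_diag]
  have hsum : ∑ i, ∑ j, d i j = 2 * ∑ j, d k j := by
    have hik : ∀ i, i ≠ k → ∑ j, d i j = d i k := by
      intro i hi
      rw [Finset.sum_eq_sum_sdiff_singleton_add (Finset.mem_univ k) (d i)]
      have : ∑ j ∈ Finset.univ \ {k}, d i j = 0 := by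
        refine Finset.sum_eq_zero fun j hj => ?_
        exact hd0 i j hi (by simpa using (Finset.mem_sdiff.mp hj).2)
      rw [this, zero_add]
    rw [Finset.sum_eq_sum_sdiff_singleton_add (Finset.mem_univ k)
      (fun i => ∑ j, d i j)]
    have h1 : ∑ i ∈ Finset.univ \ {k}, ∑ j, d i j
        = ∑ i ∈ Finset.univ \ {k}, d i k := by
      refine Finset.sum_congr rfl fun i hi => ?_
      exact hik i (by simpa using (Finset.mem_sdiff.mp hi).2)
    have h2 : ∑ i ∈ Finset.univ \ {k}, d i k = ∑ i, d i k := by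
      symm
      rw [Finset.sum_eq_sum_sdiff_singleton_add (Finset.mem_univ k) (fun i => d i k),
        hdkk, add_zero]
    have h3 : ∑ i, d i k = ∑ j, d k j :=
      Finset.sum_congr rfl fun i _ => hdsymm i k
    rw [h1, h2, h3]; ring
  have hu : ∀ c, utility2 p c k = ∑ j, q c k j := fun c => key c k
  unfold phi2
  rw [hu, hu, ← mul_sub, ← Finset.sum_sub_distrib]
  simp only [key]
  have : ∑ i, (∑ j, q cov' i j - ∑ j, q cov i j) = ∑ i, ∑ j, d i j := by
    refine Finset.sum_congr rfl fun i _ => ?_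
    rw [← Finset.sum_sub_distrib]
  rw [this, hsum, ← Finset.sum_sub_distrib]
  ring
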